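/- With 𝒜_{m,i}^k(t) the polynomials defined via the operators B₁,C₁,B₂,C₂ (as in the paper), they satisfy the recurrence 𝒜_{m,i}^k(t) = (k-1)(𝒜_{m-1,i}^{k-1}(t) - t²𝒜_{m-1,i-1}^{k-2}(t) + t𝒜_{m-1,i}^{k-2}(t)) - (k-m+i-1)·t·𝒜_{m-1,i-1}^{k-1}(t), and consequently (-1)^i A_{m,i}^k = 𝒜_{m,i}^k(1), where A_{m,i}^k satisfies A_{m,i}^k = (k-1)(A_{m-1,i}^{k-1} + A_{m-1,i}^{k-2} + A_{m-1,i-1}^{k-2}) + (k+i-m-1)A_{m-1,i-1}^{k-1} with A_{0,0}^k = δ_{k,0}. -/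

import Mathlib

open Finset

/-- The four operators `B₁, C₁, B₂, C₂`, encoded as `0, 1, 2, 3`. -/
abbrev Op := Fin 4

/-- How much an operator increments the index `k`: by `1` for `B₁, C₁`
and by `2` for `B₂, C₂`. -/
def stepIdx (o : Op) : ℤ := if o.val ≤ 1 then 1 else 2

/-- The action of an operator on a polynomial at current index `j`:
`B₁ : t_j^n ↦ j t_{j+1}^n`, `C₁ : t_j^n ↦ -n t_{j+1}^{n+1}`,
`B₂ : t_j^n ↦ (j+1) t_{j+2}^{n+1}`, `C₂ : t_j^n ↦ -(j+1) t_{j+2}^{n+2}`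
(so that, writing the output index as `k`, `B₁(t_{k-1}^n) = (k-1) t_k^n`,
`C₁(t_{k-1}^n) = -n t_k^{n+1}`, `B₂(t_{k-2}^n) = (k-1) t_k^{n+1}` and
`C₂(t_{k-2}^n) = -(k-1) t_k^{n+2}`). -/
noncomputable def applyOp (o : Op) (j : ℤ) (p : Polynomial ℤ) : Polynomial ℤ :=
  if o.val = 0 then Polynomial.C j * p
  else if o.val = 1 then -(Polynomial.X ^ 2 * Polynomial.derivative p)
  else if o.val = 2 then Polynomial.C (j + 1) * (Polynomial.X * p)
  else -(Polynomial.C (j + 1) * (Polynomial.X ^ 2 * p))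

/-- Apply a word of operators (first entry applied first), starting at index `j`. -/
noncomputable def evalWord : List Op → ℤ → Polynomial ℤ → Polynomial ℤ
  | [], _, p => p
  | o :: w, j, p => evalWord w (j + stepIdx o) (applyOp o j p)

/-- The polynomial `𝒜_{m,i}^k(t)`: the sum of `Y_m ⋯ Y_1 (t_0^0)` over all words
of `m` operators with `Y_1 ∈ {B₂, C₂}`, exactly `i` of the `Y_h` in `{C₁, C₂}`,
and exactly `k - m` of the `Y_h` in `{B₂, C₂}`; `𝒜_{0,0}^0 = 1` and `𝒜_{m,i}^k = 0`
otherwise. -/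
noncomputable def calA (m : ℕ) (i k : ℤ) : Polynomial ℤ :=
  if m = 0 then (if i = 0 ∧ k = 0 then 1 else 0)
  else
    ∑ w ∈ Finset.univ.filter (fun w : Fin m → Op =>
        (∀ a : Fin m, a.val = 0 → 2 ≤ (w a).val) ∧
        ((Finset.univ.filter (fun a : Fin m => (w a).val = 1 ∨ (w a).val = 3)).card : ℤ) = i ∧
        ((Finset.univ.filter (fun a : Fin m => 2 ≤ (w a).val)).card : ℤ) = k - m),
      evalWord (List.ofFn w) 0 1

/-- The three-parameter family of integers `A_{m,i}^k`. -/
def A : ℕ → ℤ → ℤ → ℤ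
  | 0, i, k => if i = 0 ∧ k = 0 then 1 else 0
  | m + 1, i, k =>
      if i < 0 ∨ k < 0 then 0
      else (k - 1) * (A m i (k - 1) + A m i (k - 2) + A m (i - 1) (k - 2))
            + (k + i - (m + 1) - 1) * A m (i - 1) (k - 1)


open Polynomial
-- weight of an op: degree increment
def wt (o : Op) : ℕ := (if o.val = 1 ∨ o.val = 3 then 1 else 0) + (if 2 ≤ o.val then 1 else 0)

lemma applyOp_monomial (o : Op) (j c : ℤ) (n : ℕ) :
    ∃ c', applyOp o j (C c * X ^ n) = C c' * X ^ (n + wt o) := by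
  fin_cases o
  · exact ⟨j * c, by simp [applyOp, wt]; ring⟩
  · refine ⟨-(c * n), ?_⟩
    simp only [applyOp, wt]
    norm_num
    cases n with
    | zero => simp
    | succ d =>
      simp [derivative_X_pow]
      ring
  · exact ⟨(j+1) * c, by simp [applyOp, wt]; ring⟩
  · exact ⟨-((j+1) * c), by simp [applyOp, wt]; ring⟩

lemma evalWord_monomial (l : List Op) (j c : ℤ) (n : ℕ) :
    ∃ c', evalWord l j (C c * X ^ n) = C c' * X ^ (n + (l.map wt).sum) := by
  induction l generalizing j c n with
  | nil => exact ⟨c, by simp [evalWord]⟩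
  | cons o l ih =>
    obtain ⟨c1, h1⟩ := applyOp_monomial o j c n
    obtain ⟨c2, h2⟩ := ih (j + stepIdx o) c1 (n + wt o)
    refine ⟨c2, ?_⟩
    simp only [evalWord]
    rw [h1, h2, add_assoc]
    simp

lemma evalWord_append (l : List Op) (o : Op) (j : ℤ) (p : Polynomial ℤ) :
    evalWord (l ++ [o]) j p = applyOp o (j + (l.map stepIdx).sum) (evalWord l j p) := by
  induction l generalizing j p with
  | nil => simp [evalWord]
  | cons o' l ih => simp [evalWord, ih, add_assoc]

lemma deriv_monomial (c : ℤ) (d : ℕ) :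
    -(X ^ 2 * derivative (C c * X ^ d)) = -(C (d : ℤ) * (X * (C c * X ^ d))) := by
  cases d with
  | zero => simp
  | succ e =>
    rw [derivative_C_mul, derivative_X_pow]
    push_cast
    simp [pow_succ]
    ring

lemma stepIdx_eq (o : Op) : stepIdx o = 1 + (if 2 ≤ o.val then 1 else 0) := by
  fin_cases o <;> simp [stepIdx]

lemma sum_stepIdx {n : ℕ} (v : Fin n → Op) :
    ((List.ofFn v).map stepIdx).sum
      = (n : ℤ) + ((Finset.univ.filter (fun a : Fin n => 2 ≤ (v a).val)).card : ℤ) := by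
  rw [List.map_ofFn, List.sum_ofFn]
  simp only [Function.comp_apply, stepIdx_eq]
  rw [Finset.sum_add_distrib]
  simp [Finset.sum_ite_eq, Finset.sum_boole]

lemma sum_wt {n : ℕ} (v : Fin n → Op) :
    ((List.ofFn v).map wt).sum
      = (Finset.univ.filter (fun a : Fin n => (v a).val = 1 ∨ (v a).val = 3)).card
        + (Finset.univ.filter (fun a : Fin n => 2 ≤ (v a).val)).card := by
  rw [List.map_ofFn, List.sum_ofFn]
  simp only [Function.comp_apply, wt]
  rw [Finset.sum_add_distrib]
  simp [Finset.sum_boole]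

/-- The filter predicate defining `calA`. -/
def P (m : ℕ) (i k : ℤ) (w : Fin m → Op) : Prop :=
  (∀ a : Fin m, a.val = 0 → 2 ≤ (w a).val) ∧
  ((Finset.univ.filter (fun a : Fin m => (w a).val = 1 ∨ (w a).val = 3)).card : ℤ) = i ∧
  ((Finset.univ.filter (fun a : Fin m => 2 ≤ (w a).val)).card : ℤ) = k - m

instance (m : ℕ) (i k : ℤ) : DecidablePred (P m i k) := fun w => by
  unfold P; infer_instance

noncomputable def S (m : ℕ) (i k : ℤ) : Polynomial ℤ :=
  ∑ w ∈ Finset.univ.filter (P m i k), evalWord (List.ofFn w) 0 1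

-- each word in the support of S is a monomial of the right degree
lemma word_monomial {m : ℕ} {i k : ℤ} {w : Fin m → Op} (h : P m i k w) :
    ∃ c : ℤ, ∃ d : ℕ, (d : ℤ) = i + (k - m) ∧ evalWord (List.ofFn w) 0 1 = C c * X ^ d := by
  obtain ⟨c', hc⟩ := evalWord_monomial (List.ofFn w) 0 1 0
  refine ⟨c', ((List.ofFn w).map wt).sum, ?_, by simpa using hc⟩
  rw [sum_wt]
  push_cast
  rw [h.2.1, h.2.2]

lemma S_zero (i k : ℤ) : S 0 i k = if i = 0 ∧ k = 0 then 1 else 0 := by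
  rw [S, Finset.univ_unique, Finset.filter_singleton]
  split
  · rename_i h
    have h2 := h.2
    simp only [Finset.univ_eq_empty, Finset.filter_empty, Finset.card_empty] at h2
    have hi : i = 0 ∧ k = 0 := by constructor <;> omega
    simp [hi, evalWord]
  · rename_i h
    have : ¬ (i = 0 ∧ k = 0) := by
      rintro ⟨rfl, rfl⟩
      exact h ⟨fun a => a.elim0, by simp⟩
    simp [this]

lemma P_nonneg {m : ℕ} {i k : ℤ} {w : Fin m → Op} (h : P m i k w) : 0 ≤ i ∧ (m : ℤ) ≤ k := by
  constructor
  · rw [← h.2.1]; positivity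
  · have := h.2.2; omega

lemma S_eq_zero {m : ℕ} {i k : ℤ} (h : i < 0 ∨ k < m) : S m i k = 0 := by
  rw [S]
  apply Finset.sum_eq_zero
  intro w hw
  rw [Finset.mem_filter] at hw
  have := P_nonneg hw.2
  omega

-- counting over a snoc
lemma card_snoc {n : ℕ} (v : Fin n → Op) (o : Op) (q : Op → Prop) [DecidablePred q] :
    ((Finset.univ.filter (fun a : Fin (n+1) => q ((Fin.snoc v o : Fin (n+1) → Op) a))).card : ℤ)
      = ((Finset.univ.filter (fun a : Fin n => q (v a))).card : ℤ)
        + if q o then 1 else 0 := by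
  rw [Finset.card_filter, Finset.card_filter, Fin.sum_univ_castSucc]
  simp [Fin.snoc_castSucc, Fin.snoc_last]

lemma fst_snoc_high {n : ℕ} (v : Fin n → Op) (o : Op) (ho : 2 ≤ o.val) :
    (∀ a : Fin (n+1), a.val = 0 → 2 ≤ ((Fin.snoc v o : Fin (n+1) → Op) a).val)
      ↔ (∀ a : Fin n, a.val = 0 → 2 ≤ (v a).val) := by
  constructor
  · intro h a ha
    have := h (Fin.castSucc a) (by simpa using ha)
    rwa [Fin.snoc_castSucc] at this
  · intro h a ha
    rcases Nat.eq_or_lt_of_le (Nat.le_of_lt_succ a.2) with hlt | hlt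
    · have : a = Fin.last n := by ext; simp; omega
      rw [this, Fin.snoc_last]; exact ho
    · have : a = Fin.castSucc ⟨a.val, hlt⟩ := by ext; simp
      rw [this, Fin.snoc_castSucc]
      exact h _ ha

lemma fst_snoc_low {n : ℕ} (v : Fin n → Op) (o : Op) (hn : 1 ≤ n) :
    (∀ a : Fin (n+1), a.val = 0 → 2 ≤ ((Fin.snoc v o : Fin (n+1) → Op) a).val)
      ↔ (∀ a : Fin n, a.val = 0 → 2 ≤ (v a).val) := by
  constructor
  · intro h a ha
    have := h (Fin.castSucc a) (by simpa using ha)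
    rwa [Fin.snoc_castSucc] at this
  · intro h a ha
    have hlt : a.val < n := by omega
    have : a = Fin.castSucc ⟨a.val, hlt⟩ := by ext; simp
    rw [this, Fin.snoc_castSucc]
    exact h _ ha

lemma ofFn_snoc {n : ℕ} (v : Fin n → Op) (o : Op) :
    List.ofFn (Fin.snoc v o : Fin (n+1) → Op) = List.ofFn v ++ [o] := by
  rw [List.ofFn_succ']
  simp [Fin.snoc_castSucc, Fin.snoc_last]

lemma P_snoc_iff {n : ℕ} (i k : ℤ) (v : Fin n → Op) (o : Op) (h : 1 ≤ n ∨ 2 ≤ o.val) :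
    P (n+1) i k (Fin.snoc v o)
      ↔ P n (i - if o.val = 1 ∨ o.val = 3 then 1 else 0) (k - stepIdx o) v := by
  have hC := card_snoc v o (fun x => x.val = 1 ∨ x.val = 3)
  have hB := card_snoc v o (fun x => 2 ≤ x.val)
  have hfst : (∀ a : Fin (n+1), a.val = 0 → 2 ≤ ((Fin.snoc v o : Fin (n+1) → Op) a).val)
      ↔ (∀ a : Fin n, a.val = 0 → 2 ≤ (v a).val) := by
    rcases h with h | h
    · exact fst_snoc_low v o h
    · exact fst_snoc_high v o h
  unfold P
  rw [hfst]
  constructor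
  · rintro ⟨h1, h2, h3⟩
    refine ⟨h1, ?_, ?_⟩ <;> fin_cases o <;> simp_all [stepIdx] <;> push_cast at * <;> omega
  · rintro ⟨h1, h2, h3⟩
    refine ⟨h1, ?_, ?_⟩ <;> fin_cases o <;> simp_all [stepIdx] <;> push_cast at * <;> omega

lemma opval0 : ((0:Op)).val = 0 := rfl
lemma opval1 : ((1:Op)).val = 1 := rfl
lemma opval2 : ((2:Op)).val = 2 := rfl
lemma opval3 : ((3:Op)).val = 3 := rfl

lemma P_snoc0 {n : ℕ} (hn : 1 ≤ n) (i k : ℤ) (v : Fin n → Op) :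
    P (n+1) i k (Fin.snoc v (0:Op)) ↔ P n i (k-1) v := by
  simpa [stepIdx, opval0] using P_snoc_iff i k v 0 (Or.inl hn)

lemma P_snoc1 {n : ℕ} (hn : 1 ≤ n) (i k : ℤ) (v : Fin n → Op) :
    P (n+1) i k (Fin.snoc v (1:Op)) ↔ P n (i-1) (k-1) v := by
  simpa [stepIdx, opval1] using P_snoc_iff i k v 1 (Or.inl hn)

lemma P_snoc2 {n : ℕ} (i k : ℤ) (v : Fin n → Op) :
    P (n+1) i k (Fin.snoc v (2:Op)) ↔ P n i (k-2) v := by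
  simpa [stepIdx, opval2] using P_snoc_iff i k v 2 (Or.inr (by rw [opval2]))

lemma P_snoc3 {n : ℕ} (i k : ℤ) (v : Fin n → Op) :
    P (n+1) i k (Fin.snoc v (3:Op)) ↔ P n (i-1) (k-2) v := by
  simpa [stepIdx, opval3] using P_snoc_iff i k v 3 (Or.inr (by rw [opval3]; omega))

lemma not_P_snoc_low (i k : ℤ) (v : Fin 0 → Op) (o : Op) (ho : o.val ≤ 1) :
    ¬ P 1 i k (Fin.snoc v o) := by
  intro h
  have := h.1 (Fin.last 0) rfl
  rw [Fin.snoc_last] at this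
  omega

lemma branch2 (n : ℕ) (i k : ℤ) :
    (∑ v : Fin n → Op,
        if P (n+1) i k (Fin.snoc v (2 : Op))
        then evalWord (List.ofFn (Fin.snoc v (2 : Op) : Fin (n+1) → Op)) 0 1 else 0)
      = C (k - 1) * (X * S n i (k - 2)) := by
  rw [S, Finset.sum_filter, Finset.mul_sum, Finset.mul_sum]
  apply Finset.sum_congr rfl
  intro v _
  by_cases h : P n i (k - 2) v
  · rw [if_pos ((P_snoc2 i k v).mpr h), if_pos h, ofFn_snoc, evalWord_append, sum_stepIdx, h.2.2,
      show (0:ℤ) + ((n:ℤ) + (k - 2 - (n:ℤ))) = k - 2 by ring]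
    simp only [applyOp, opval2]
    norm_num
    left
    ring
  · rw [if_neg (fun hh => h ((P_snoc2 i k v).mp hh)), if_neg h, mul_zero, mul_zero]

lemma branch3 (n : ℕ) (i k : ℤ) :
    (∑ v : Fin n → Op,
        if P (n+1) i k (Fin.snoc v (3 : Op))
        then evalWord (List.ofFn (Fin.snoc v (3 : Op) : Fin (n+1) → Op)) 0 1 else 0)
      = -(C (k - 1) * (X ^ 2 * S n (i-1) (k - 2))) := by
  rw [S, Finset.sum_filter, Finset.mul_sum, Finset.mul_sum, ← Finset.sum_neg_distrib]
  apply Finset.sum_congr rfl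
  intro v _
  by_cases h : P n (i-1) (k - 2) v
  · rw [if_pos ((P_snoc3 i k v).mpr h), if_pos h, ofFn_snoc, evalWord_append, sum_stepIdx, h.2.2,
      show (0:ℤ) + ((n:ℤ) + (k - 2 - (n:ℤ))) = k - 2 by ring]
    simp only [applyOp, opval3]
    norm_num
    left
    ring
  · rw [if_neg (fun hh => h ((P_snoc3 i k v).mp hh)), if_neg h, mul_zero, mul_zero, neg_zero]

lemma branch0 (n : ℕ) (i k : ℤ) :
    (∑ v : Fin n → Op,
        if P (n+1) i k (Fin.snoc v (0 : Op))
        then evalWord (List.ofFn (Fin.snoc v (0 : Op) : Fin (n+1) → Op)) 0 1 else 0)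
      = C (k - 1) * S n i (k - 1) := by
  cases n with
  | zero =>
    rw [Finset.sum_eq_zero (fun v _ => if_neg (not_P_snoc_low i k v 0 (by rw [opval0]; omega)))]
    rw [S_zero]
    by_cases h : i = 0 ∧ k - 1 = 0
    · rw [if_pos h, mul_one, show k - 1 = 0 by omega]
      simp
    · rw [if_neg h, mul_zero]
  | succ m =>
    have hn : 1 ≤ m + 1 := Nat.le_add_left 1 m
    rw [S, Finset.sum_filter, Finset.mul_sum]
    apply Finset.sum_congr rfl
    intro v _
    by_cases h : P (m+1) i (k-1) v
    · rw [if_pos ((P_snoc0 hn i k v).mpr h), if_pos h, ofFn_snoc, evalWord_append, sum_stepIdx,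
        h.2.2, show (0:ℤ) + (((m+1:ℕ):ℤ) + (k - 1 - ((m+1:ℕ):ℤ))) = k - 1 by ring]
      simp only [applyOp, opval0]
      norm_num
    · rw [if_neg (fun hh => h ((P_snoc0 hn i k v).mp hh)), if_neg h, mul_zero]

lemma branch1 (n : ℕ) (i k : ℤ) :
    (∑ v : Fin n → Op,
        if P (n+1) i k (Fin.snoc v (1 : Op))
        then evalWord (List.ofFn (Fin.snoc v (1 : Op) : Fin (n+1) → Op)) 0 1 else 0)
      = -(C (k - ((n+1:ℕ):ℤ) + i - 1) * (X * S n (i-1) (k - 1))) := by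
  cases n with
  | zero =>
    rw [Finset.sum_eq_zero (fun v _ => if_neg (not_P_snoc_low i k v 1 (by rw [opval1]))),
      S_zero]
    by_cases h : i - 1 = 0 ∧ k - 1 = 0
    · rw [if_pos h, mul_one, show k - ((0+1:ℕ):ℤ) + i - 1 = 0 by push_cast; omega]
      simp
    · rw [if_neg h, mul_zero, mul_zero, neg_zero]
  | succ m =>
    have hn : 1 ≤ m + 1 := Nat.le_add_left 1 m
    rw [S, Finset.sum_filter, Finset.mul_sum, Finset.mul_sum, ← Finset.sum_neg_distrib]
    apply Finset.sum_congr rfl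
    intro v _
    by_cases h : P (m+1) (i-1) (k-1) v
    · rw [if_pos ((P_snoc1 hn i k v).mpr h), if_pos h, ofFn_snoc, evalWord_append]
      obtain ⟨c, d, hd, hmono⟩ := word_monomial h
      simp only [applyOp, opval1]
      rw [if_neg (by norm_num), if_pos trivial, hmono, deriv_monomial, ← hmono, hd,
        show i - 1 + (k - 1 - ((m+1:ℕ):ℤ)) = k - ((m+1+1:ℕ):ℤ) + i - 1 by push_cast; ring]
    · rw [if_neg (fun hh => h ((P_snoc1 hn i k v).mp hh)), if_neg h, mul_zero, mul_zero, neg_zero]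

lemma S_succ (n : ℕ) (i k : ℤ) :
    S (n+1) i k
      = C (k - 1) * (S n i (k-1) - X^2 * S n (i-1) (k-2) + X * S n i (k-2))
        - C (k - ((n+1:ℕ):ℤ) + i - 1) * (X * S n (i-1) (k-1)) := by
  have he : ∀ (p : Op × (Fin n → Op)),
      (Fin.snocEquiv (fun _ => Op)) p = (Fin.snoc p.2 p.1 : Fin (n+1) → Op) :=
    fun p => funext fun a => rfl
  rw [S, Finset.sum_filter, ← Equiv.sum_comp (Fin.snocEquiv (fun _ => Op))
      (fun w => if P (n+1) i k w then evalWord (List.ofFn w) 0 1 else 0)]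
  simp only [he]
  rw [Fintype.sum_prod_type, Fin.sum_univ_four, branch0, branch1, branch2, branch3]
  ring

lemma calA_eq_S (m : ℕ) (i k : ℤ) : calA m i k = S m i k := by
  cases m with
  | zero => rw [calA, if_pos rfl, S_zero]
  | succ n =>
    rw [calA, if_neg (Nat.succ_ne_zero n), S]
    rfl

lemma calA_succ (n : ℕ) (i k : ℤ) :
    calA (n+1) i k
      = C (k - 1) * (calA n i (k-1) - X^2 * calA n (i-1) (k-2) + X * calA n i (k-2))
        - C (k - ((n+1:ℕ):ℤ) + i - 1) * (X * calA n (i-1) (k-1)) := by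
  simp only [calA_eq_S]
  exact S_succ n i k

lemma calA_vanish {m : ℕ} {i k : ℤ} (h : i < 0 ∨ k < 0) : calA m i k = 0 := by
  rw [calA_eq_S]
  cases m with
  | zero =>
    rw [S_zero, if_neg]
    rintro ⟨rfl, rfl⟩
    omega
  | succ n => exact S_eq_zero (by omega)

lemma A_vanish {m : ℕ} {i k : ℤ} (h : i < 0 ∨ k < 0) : A m i k = 0 := by
  cases m with
  | zero =>
    rw [A, if_neg]
    rintro ⟨rfl, rfl⟩
    omega
  | succ n => rw [A, if_pos h]

lemma evalA : ∀ (m : ℕ) (i k : ℤ), (calA m i k).eval 1 = (-1 : ℤ)^i.toNat * A m i k := by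
  intro m
  induction m with
  | zero =>
    intro i k
    rw [calA, if_pos rfl, A]
    by_cases h : i = 0 ∧ k = 0
    · rw [if_pos h, if_pos h, h.1]
      simp
    · rw [if_neg h, if_neg h]
      simp
  | succ m ih =>
    intro i k
    by_cases hneg : i < 0 ∨ k < 0
    · rw [calA_vanish hneg, A_vanish hneg]
      simp
    · push_neg at hneg
      rw [calA_succ, A, if_neg (by omega)]
      simp only [Polynomial.eval_sub, Polynomial.eval_add, Polynomial.eval_mul,
        Polynomial.eval_C, Polynomial.eval_X, Polynomial.eval_pow, one_pow, one_mul]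
      rw [ih i (k-1), ih (i-1) (k-2), ih i (k-2), ih (i-1) (k-1)]
      by_cases hi : i = 0
      · subst hi
        rw [A_vanish (m := m) (i := (0:ℤ)-1) (k := k-2) (by omega),
          A_vanish (m := m) (i := (0:ℤ)-1) (k := k-1) (by omega)]
        push_cast
        ring
      · have hs : (-1 : ℤ)^i.toNat = -(-1 : ℤ)^((i-1).toNat) := by
          rw [show i.toNat = (i-1).toNat + 1 by omega, pow_succ]
          ring
        rw [hs]
        push_cast
        ring

theorem stmt_16 :
    (∀ (m : ℕ), 1 ≤ m → ∀ i k : ℤ,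
      calA m i k
        = Polynomial.C (k - 1) *
              (calA (m - 1) i (k - 1)
                - Polynomial.X ^ 2 * calA (m - 1) (i - 1) (k - 2)
                + Polynomial.X * calA (m - 1) i (k - 2))
            - Polynomial.C (k - m + i - 1) * (Polynomial.X * calA (m - 1) (i - 1) (k - 1)))
    ∧ ∀ (m i k : ℕ), ((-1 : ℤ) ^ i) * A m i k = (calA m i k).eval 1 := by
  constructor
  · intro m hm i k
    obtain ⟨n, rfl⟩ : ∃ n, m = n + 1 := ⟨m - 1, by omega⟩
    rw [calA_succ]
    simp only [Nat.add_sub_cancel]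
  · intro m i k
    rw [evalA m i k]
    simp
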